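/- Fix p ∈ (0,1). For each integer n ≥ 2 let P_n denote the Poisson distribution with mean −n·log(p). Then: (i) for every y ∈ (p,1), lim_{n→∞} (1/n)·log P_n({j ∈ ℕ : (1−1/n)^j ≥ y}) = −I(y); (ii) for every y ∈ (0,p), lim_{n→∞} (1/n)·log P_n({j ∈ ℕ : (1−1/n)^j ≤ y}) = −I(y). -/

import Mathlib

open Filter ProbabilityTheory

/-- The AMS rate function `I` with parameter `p`, defined on `(0,1)`. -/
noncomputable def amsRate (p y : ℝ) : ℝ :=
  Real.log y * Real.log (Real.log p / Real.log y) + Real.log (y / p)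

open Real MeasureTheory Set
open scoped NNReal Nat Topology


lemma AMS_summable_pois (r : ℝ≥0) : Summable (poissonPMFReal r) := (poissonPMFRealSum r).summable

lemma AMS_meas_toReal (r : ℝ≥0) (S : Set ℕ) :
    ((poissonMeasure r) S).toReal = ∑' j, S.indicator (poissonPMFReal r) j := by
  have hPM : poissonMeasure r S = (poissonPMF r).toMeasure S := by
    rw [poissonMeasure, Measure.sum_apply _ (MeasurableSet.of_discrete (s := S)),
      PMF.toMeasure_apply (hs := MeasurableSet.of_discrete (s := S))]
    refine tsum_congr fun n => ?_
    rw [Measure.smul_apply, Measure.dirac_apply' _ (MeasurableSet.of_discrete (s := S))]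
    by_cases hn : n ∈ S <;> simp [hn, ← poissonPMFReal_ofReal_eq_poissonPMF, poissonPMFReal]
  rw [hPM, PMF.toMeasure_apply (hs := MeasurableSet.of_discrete (s := S))]
  have h1 : ∀ x, S.indicator (⇑(poissonPMF r)) x
      = ENNReal.ofReal (S.indicator (poissonPMFReal r) x) := by
    intro x; by_cases hx : x ∈ S
    · simp only [Set.indicator_of_mem hx]; rfl
    · simp [hx]
  rw [tsum_congr h1, ← ENNReal.ofReal_tsum_of_nonneg
      (fun n => Set.indicator_nonneg (fun _ _ => poissonPMFReal_nonneg) n)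
      ((AMS_summable_pois r).indicator S),
    ENNReal.toReal_ofReal (tsum_nonneg
      (fun n => Set.indicator_nonneg (fun _ _ => poissonPMFReal_nonneg) n))]

lemma AMS_tsum_exp (c : ℝ) : ∑' j : ℕ, c ^ j / (j ! : ℝ) = exp c := by
  rw [exp_eq_exp_ℝ]; exact (NormedSpace.expSeries_div_hasSum_exp c).tsum_eq

lemma AMS_pois_le_tsum (r : ℝ≥0) (S : Set ℕ) {k : ℕ} (hk : k ∈ S) :
    poissonPMFReal r k ≤ ∑' j, S.indicator (poissonPMFReal r) j := by
  have := Summable.le_tsum ((AMS_summable_pois r).indicator S) k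
    (fun j _ => Set.indicator_nonneg (fun _ _ => poissonPMFReal_nonneg) j)
  rwa [Set.indicator_of_mem hk] at this


lemma AMS_chernoff_Iic (r : ℝ≥0) (K : ℕ) (θ : ℝ) (hθ : 0 ≤ θ) :
    ∑' j, (Set.Iic K).indicator (poissonPMFReal r) j
      ≤ exp (θ * K - r + r * exp (-θ)) := by
  have hsum : Summable (fun j : ℕ => exp (θ * K - r) * ((r * exp (-θ)) ^ j / j !)) :=
    (Real.summable_pow_div_factorial _).mul_left _
  have hle : ∀ j, (Set.Iic K).indicator (poissonPMFReal r) j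
      ≤ exp (θ * K - r) * ((r * exp (-θ)) ^ j / j !) := by
    intro j
    by_cases hj : j ∈ Set.Iic K
    · rw [Set.indicator_of_mem hj, poissonPMFReal]
      have hkey : exp (θ * K - r) * ((r * exp (-θ)) ^ j / j !)
          = exp (-r) * (r : ℝ) ^ j / j ! * exp (θ * ((K : ℝ) - j)) := by
        rw [mul_pow, ← Real.exp_nat_mul]
        have h2 : exp (θ * K - r) * exp ((j : ℝ) * -θ)
            = exp (-(r:ℝ)) * exp (θ * ((K : ℝ) - j)) := by
          rw [← Real.exp_add, ← Real.exp_add]; congr 1; ring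
        calc exp (θ * K - r) * ((r:ℝ) ^ j * exp ((j:ℝ) * -θ) / j !)
            = exp (θ * K - r) * exp ((j : ℝ) * -θ) * ((r:ℝ) ^ j / j !) := by ring
          _ = exp (-(r:ℝ)) * exp (θ * ((K : ℝ) - j)) * ((r:ℝ) ^ j / j !) := by rw [h2]
          _ = exp (-(r:ℝ)) * (r : ℝ) ^ j / j ! * exp (θ * ((K : ℝ) - j)) := by ring
      rw [hkey]
      have h1 : (1 : ℝ) ≤ exp (θ * ((K : ℝ) - j)) := by
        rw [← Real.exp_zero]
        apply Real.exp_le_exp.2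
        have : (j : ℝ) ≤ K := Nat.cast_le.2 hj
        nlinarith
      nlinarith [mul_le_mul_of_nonneg_left h1
        (by positivity : (0:ℝ) ≤ exp (-r) * (r : ℝ) ^ j / j !)]
    · rw [Set.indicator_of_notMem hj]; positivity
  calc ∑' j, (Set.Iic K).indicator (poissonPMFReal r) j
      ≤ ∑' j : ℕ, exp (θ * K - r) * ((r * exp (-θ)) ^ j / j !) :=
        Summable.tsum_le_tsum hle ((AMS_summable_pois r).indicator _) hsum
    _ = exp (θ * K - r) * exp (r * exp (-θ)) := by rw [tsum_mul_left, AMS_tsum_exp]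
    _ = exp (θ * K - r + r * exp (-θ)) := (Real.exp_add _ _).symm

lemma AMS_chernoff_Ici (r : ℝ≥0) (K : ℕ) (θ : ℝ) (hθ : 0 ≤ θ) :
    ∑' j, (Set.Ici K).indicator (poissonPMFReal r) j
      ≤ exp (-(θ * K) - r + r * exp θ) := by
  have hsum : Summable (fun j : ℕ => exp (-(θ * K) - r) * ((r * exp θ) ^ j / j !)) :=
    (Real.summable_pow_div_factorial _).mul_left _
  have hle : ∀ j, (Set.Ici K).indicator (poissonPMFReal r) j
      ≤ exp (-(θ * K) - r) * ((r * exp θ) ^ j / j !) := by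
    intro j
    by_cases hj : j ∈ Set.Ici K
    · rw [Set.indicator_of_mem hj, poissonPMFReal]
      have hkey : exp (-(θ * K) - r) * ((r * exp θ) ^ j / j !)
          = exp (-r) * (r : ℝ) ^ j / j ! * exp (θ * ((j : ℝ) - K)) := by
        rw [mul_pow, ← Real.exp_nat_mul]
        have h2 : exp (-(θ * K) - r) * exp ((j : ℝ) * θ)
            = exp (-(r:ℝ)) * exp (θ * ((j : ℝ) - K)) := by
          rw [← Real.exp_add, ← Real.exp_add]; congr 1; ring
        calc exp (-(θ * K) - r) * ((r:ℝ) ^ j * exp ((j:ℝ) * θ) / j !)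
            = exp (-(θ * K) - r) * exp ((j : ℝ) * θ) * ((r:ℝ) ^ j / j !) := by ring
          _ = exp (-(r:ℝ)) * exp (θ * ((j : ℝ) - K)) * ((r:ℝ) ^ j / j !) := by rw [h2]
          _ = exp (-(r:ℝ)) * (r : ℝ) ^ j / j ! * exp (θ * ((j : ℝ) - K)) := by ring
      rw [hkey]
      have h1 : (1 : ℝ) ≤ exp (θ * ((j : ℝ) - K)) := by
        rw [← Real.exp_zero]
        apply Real.exp_le_exp.2
        have : (K : ℝ) ≤ j := Nat.cast_le.2 hj
        nlinarith
      nlinarith [mul_le_mul_of_nonneg_left h1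
        (by positivity : (0:ℝ) ≤ exp (-r) * (r : ℝ) ^ j / j !)]
    · rw [Set.indicator_of_notMem hj]; positivity
  calc ∑' j, (Set.Ici K).indicator (poissonPMFReal r) j
      ≤ ∑' j : ℕ, exp (-(θ * K) - r) * ((r * exp θ) ^ j / j !) :=
        Summable.tsum_le_tsum hle ((AMS_summable_pois r).indicator _) hsum
    _ = exp (-(θ * K) - r) * exp (r * exp θ) := by rw [tsum_mul_left, AMS_tsum_exp]
    _ = exp (-(θ * K) - r + r * exp θ) := (Real.exp_add _ _).symm


lemma AMS_factorial_mul_exp_le : ∀ k : ℕ, 1 ≤ k → (k ! : ℝ) * exp k ≤ (k:ℝ) ^ (k + 1) * exp 1 := by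
  intro k hk
  induction k with
  | zero => omega
  | succ m ih =>
    rcases Nat.lt_or_ge m 1 with h | hm
    · interval_cases m
      norm_num [Nat.factorial]
    · have ihm := ih hm
      have hmpos : (0:ℝ) < m := by exact_mod_cast hm
      have hx : (0:ℝ) < ((m:ℝ)+1)/m := by positivity
      have hlog : 1/((m:ℝ)+1) ≤ log (((m:ℝ)+1)/m) := by
        have h := Real.log_le_sub_one_of_pos (show (0:ℝ) < (m:ℝ)/((m:ℝ)+1) by positivity)
        have hli : Real.log ((m:ℝ)/((m:ℝ)+1)) = - Real.log (((m:ℝ)+1)/m) := by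
          rw [← Real.log_inv]; congr 1; rw [inv_div]
        have heq : (m:ℝ)/((m:ℝ)+1) - 1 = -(1/((m:ℝ)+1)) := by field_simp; ring
        rw [hli, heq] at h
        linarith
      have hexp : exp 1 ≤ (((m:ℝ)+1)/m) ^ (m+1) := by
        have h1 : (1:ℝ) ≤ ((m:ℝ)+1) * log (((m:ℝ)+1)/m) := by
          have := mul_le_mul_of_nonneg_left hlog (show (0:ℝ) ≤ (m:ℝ)+1 by positivity)
          have heq : ((m:ℝ)+1) * (1/((m:ℝ)+1)) = 1 := by field_simp
          linarith
        calc exp 1 ≤ exp (((m:ℝ)+1) * log (((m:ℝ)+1)/m)) := Real.exp_le_exp.2 h1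
          _ = (((m:ℝ)+1)/m) ^ (m+1) := by
              have hc : ((m:ℝ)+1) * log (((m:ℝ)+1)/m) = ((m+1 : ℕ):ℝ) * log (((m:ℝ)+1)/m) := by
                push_cast; ring
              rw [hc, Real.exp_nat_mul, Real.exp_log hx]
      have hkey : exp 1 * (m:ℝ) ^ (m+1) ≤ ((m:ℝ)+1) ^ (m+1) := by
        have h2 := mul_le_mul_of_nonneg_right hexp (pow_nonneg hmpos.le (m+1))
        rwa [div_pow, div_mul_cancel₀] at h2
        positivity
      have hfact : ((m+1)! : ℝ) * exp ((m:ℝ)+1) = ((m:ℝ)+1) * ((m ! : ℝ) * exp m) * exp 1 := by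
        push_cast [Nat.factorial_succ]
        rw [Real.exp_add]
        ring
      have step1 : ((m:ℝ)+1) * ((m ! : ℝ) * exp m) * exp 1
          ≤ ((m:ℝ)+1) * ((m:ℝ) ^ (m+1) * exp 1) * exp 1 := by gcongr
      have step2 : ((m:ℝ)+1) * ((m:ℝ) ^ (m+1) * exp 1) * exp 1
          ≤ ((m:ℝ)+1) ^ (m+2) * exp 1 := by
        have h3 := mul_le_mul_of_nonneg_right
          (mul_le_mul_of_nonneg_left hkey (show (0:ℝ) ≤ (m:ℝ)+1 by positivity)) (exp_pos 1).le
        calc ((m:ℝ)+1) * ((m:ℝ) ^ (m+1) * exp 1) * exp 1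
            = ((m:ℝ)+1) * (exp 1 * (m:ℝ) ^ (m+1)) * exp 1 := by ring
          _ ≤ ((m:ℝ)+1) * ((m:ℝ)+1) ^ (m+1) * exp 1 := h3
          _ = ((m:ℝ)+1) ^ (m+2) * exp 1 := by ring
      rw [Nat.factorial_succ]
      push_cast
      calc ((m:ℝ) + 1) * (m ! : ℝ) * exp ((m:ℝ)+1)
          = ((m:ℝ)+1) * ((m ! : ℝ) * exp m) * exp 1 := by rw [Real.exp_add]; ring
        _ ≤ ((m:ℝ)+1) ^ (m+2) * exp 1 := le_trans step1 step2
        _ = ((m:ℝ)+1) ^ (m+1+1) * exp 1 := by norm_num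

lemma AMS_log_factorial_le {k : ℕ} (hk : 1 ≤ k) :
    Real.log (k !) ≤ ((k:ℝ)+1) * Real.log k + 1 - k := by
  have h := AMS_factorial_mul_exp_le k hk
  have hk0 : (0:ℝ) < k := by exact_mod_cast hk
  have hfp : (0:ℝ) < (k ! : ℝ) := by exact_mod_cast k.factorial_pos
  have hle : (k ! : ℝ) ≤ (k:ℝ) ^ (k+1) * exp (1 - k) := by
    rw [Real.exp_sub, ← mul_div_assoc]
    exact (le_div_iff₀ (exp_pos _)).2 h
  have := Real.log_le_log hfp hle
  rw [Real.log_mul (by positivity) (exp_ne_zero _), Real.log_pow, Real.log_exp] at this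
  push_cast at this
  linarith


lemma AMS_master (p : ℝ) (hp0 : 0 < p) (hp1 : p < 1) (a : ℝ) (ha : 0 < a)
    (K : ℕ → ℕ) (S : ℕ → Set ℕ)
    (hK : Tendsto (fun n : ℕ => (K n : ℝ) / n) atTop (𝓝 a))
    (hmem : ∀ᶠ n : ℕ in atTop, K n ∈ S n)
    (hub : ∀ᶠ n : ℕ in atTop,
      ((poissonMeasure ((-(n:ℝ) * Real.log p).toNNReal)) (S n)).toReal
        ≤ exp ((K n : ℝ) * Real.log (((n:ℝ) * (-Real.log p)) / K n)
            + K n - (n:ℝ) * (-Real.log p))) :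
    Tendsto (fun n : ℕ => (1/(n:ℝ)) * Real.log
        ((poissonMeasure ((-(n:ℝ) * Real.log p).toNNReal)) (S n)).toReal)
      atTop (𝓝 (a * Real.log ((-Real.log p)/a) + a + Real.log p)) := by
  set l : ℝ := -Real.log p with hldef
  have hl : 0 < l := by
    have := Real.log_neg hp0 hp1
    simp only [hldef]; linarith
  -- rewrite the limit value
  have hval : a * Real.log (l/a) + a + Real.log p
      = a * (Real.log l - Real.log a) + a - l := by
    rw [Real.log_div (ne_of_gt hl) (ne_of_gt ha)]
    simp only [hldef]; ring
  rw [hval]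
  set L : ℝ := a * (Real.log l - Real.log a) + a - l with hLdef
  -- notation
  set F : ℕ → ℝ := fun n => (1/(n:ℝ)) * Real.log
      ((poissonMeasure ((-(n:ℝ) * Real.log p).toNNReal)) (S n)).toReal with hFdef
  set G : ℕ → ℝ := fun n =>
      ((K n:ℝ)/n) * (Real.log l - Real.log ((K n:ℝ)/n)) + (K n:ℝ)/n - l with hGdef
  -- coercion facts
  have hr : ∀ n : ℕ, (((-(n:ℝ) * Real.log p).toNNReal : ℝ≥0) : ℝ) = (n:ℝ) * l := by
    intro n
    rw [Real.coe_toNNReal]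
    · simp only [hldef]; ring
    · nlinarith [Real.log_neg hp0 hp1, (Nat.cast_nonneg n : (0:ℝ) ≤ n)]
  -- eventual basic facts
  have hK1 : ∀ᶠ n : ℕ in atTop, 1 ≤ K n := by
    filter_upwards [hK.eventually_const_lt (show (0:ℝ) < a by linarith) ,
      eventually_ge_atTop 1] with n h1 h2
    by_contra hc
    push_neg at hc
    have hz : K n = 0 := by omega
    rw [hz] at h1
    simp at h1
  have hlog : Tendsto (fun n : ℕ => Real.log ((K n:ℝ)/n)) atTop (𝓝 (Real.log a)) :=
    hK.log (ne_of_gt ha)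
  have hG : Tendsto G atTop (𝓝 L) := by
    exact ((hK.mul (tendsto_const_nhds.sub hlog)).add hK).sub_const l
  -- (1 + log K n)/n → 0
  have hlogn : Tendsto (fun n : ℕ => Real.log n / n) atTop (𝓝 0) :=
    (Real.isLittleO_log_id_atTop.tendsto_div_nhds_zero).comp tendsto_natCast_atTop_atTop
  have htt : Tendsto (fun n : ℕ => (1 + Real.log (K n))/n) atTop (𝓝 0) := by
    have he : ∀ᶠ n : ℕ in atTop, (1 + Real.log (K n))/n
        = 1/n + (Real.log ((K n:ℝ)/n) * (1/n) + Real.log n / n) := by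
      filter_upwards [hK1, eventually_ge_atTop 1] with n h1 h2
      have hn0 : (n:ℝ) ≠ 0 := by positivity
      have hk0 : ((K n):ℝ) ≠ 0 := by
        have : (1:ℝ) ≤ K n := by exact_mod_cast h1
        linarith
      have : Real.log (K n) = Real.log ((K n:ℝ)/n) + Real.log n := by
        rw [← Real.log_mul (by positivity) hn0, div_mul_cancel₀ _ hn0]
      rw [this]
      field_simp
      try ring
    rw [tendsto_congr' he]
    have : (0:ℝ) = 0 + (Real.log a * 0 + 0) := by ring
    rw [this]
    exact tendsto_one_div_atTop_nhds_zero_nat.add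
      ((hlog.mul tendsto_one_div_atTop_nhds_zero_nat).add hlogn)
  have hLow : Tendsto (fun n : ℕ => G n - (1 + Real.log (K n))/n) atTop (𝓝 L) := by
    have := hG.sub htt
    simpa using this
  -- pointwise bounds eventually
  have hup : ∀ᶠ n : ℕ in atTop, F n ≤ G n := by
    filter_upwards [hub, hK1, eventually_ge_atTop 1, hmem] with n hubn h1 hn hmemn
    have hn0 : (0:ℝ) < n := by exact_mod_cast hn
    have hk0 : (0:ℝ) < K n := by exact_mod_cast h1
    have hrn : (0 : ℝ≥0) < (-(n:ℝ) * Real.log p).toNNReal := by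
      rw [Real.toNNReal_pos]
      nlinarith [Real.log_neg hp0 hp1, hn0]
    -- positivity of P
    have hP : 0 < ((poissonMeasure ((-(n:ℝ) * Real.log p).toNNReal)) (S n)).toReal := by
      rw [AMS_meas_toReal]
      exact lt_of_lt_of_le (poissonPMFReal_pos hrn) (AMS_pois_le_tsum _ _ hmemn)
    -- exponent equality
    have hexpeq : (K n : ℝ) * Real.log (((n:ℝ) * l) / K n) + K n - (n:ℝ) * l = n * G n := by
      have : ((n:ℝ) * l) / K n = l / ((K n:ℝ)/n) := by
        rw [div_div_eq_mul_div]
        ring_nf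
      rw [this, Real.log_div (ne_of_gt hl) (by positivity)]
      simp only [hGdef]
      field_simp
      try ring
    have hlogP : Real.log ((poissonMeasure ((-(n:ℝ) * Real.log p).toNNReal)) (S n)).toReal
        ≤ n * G n := by
      rw [← hexpeq]
      calc Real.log _ ≤ Real.log (exp ((K n : ℝ) * Real.log (((n:ℝ) * l) / K n)
            + K n - (n:ℝ) * l)) := Real.log_le_log hP hubn
        _ = _ := Real.log_exp _
    simp only [hFdef]
    calc (1/(n:ℝ)) * Real.log _ ≤ (1/(n:ℝ)) * ((n:ℝ) * G n) := by
          apply mul_le_mul_of_nonneg_left hlogP (by positivity)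
      _ = G n := by field_simp
  have hlow : ∀ᶠ n : ℕ in atTop, G n - (1 + Real.log (K n))/n ≤ F n := by
    filter_upwards [hK1, eventually_ge_atTop 1, hmem] with n h1 hn hmemn
    have hn0 : (0:ℝ) < n := by exact_mod_cast hn
    have hk0 : (0:ℝ) < K n := by exact_mod_cast h1
    have hk1 : (1:ℝ) ≤ K n := by exact_mod_cast h1
    have hrn : (0 : ℝ≥0) < (-(n:ℝ) * Real.log p).toNNReal := by
      rw [Real.toNNReal_pos]
      nlinarith [Real.log_neg hp0 hp1, hn0]
    have hmu : (0:ℝ) < (n:ℝ) * l := by positivity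
    -- log of the single term
    have hterm : (n:ℝ) * G n - (1 + Real.log (K n))
        ≤ Real.log (poissonPMFReal ((-(n:ℝ) * Real.log p).toNNReal) (K n)) := by
      rw [poissonPMFReal]
      rw [Real.log_div (by positivity) (by positivity : ((K n)! : ℝ) ≠ 0),
        Real.log_mul (exp_ne_zero _) (by positivity), Real.log_exp, Real.log_pow, hr n]
      have hf := AMS_log_factorial_le h1
      have hGn : (n:ℝ) * G n = (K n:ℝ) * (Real.log ((n:ℝ)*l) - Real.log (K n)) + K n
          - (n:ℝ) * l := by
        have h2 : Real.log ((K n:ℝ)/n) = Real.log (K n) - Real.log n := by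
          rw [Real.log_div (by positivity) (by positivity)]
        have h3 : Real.log ((n:ℝ)*l) = Real.log n + Real.log l := by
          rw [Real.log_mul (by positivity) (ne_of_gt hl)]
        simp only [hGdef]
        rw [h2, h3]
        field_simp
        ring_nf
        try tauto
      rw [hGn]
      push_cast at hf ⊢
      linarith
    -- log P ≥ log term
    have hPge : Real.log (poissonPMFReal ((-(n:ℝ) * Real.log p).toNNReal) (K n))
        ≤ Real.log ((poissonMeasure ((-(n:ℝ) * Real.log p).toNNReal)) (S n)).toReal := by
      apply Real.log_le_log (poissonPMFReal_pos hrn)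
      rw [AMS_meas_toReal]
      exact AMS_pois_le_tsum _ _ hmemn
    have : (n:ℝ) * G n - (1 + Real.log (K n))
        ≤ Real.log ((poissonMeasure ((-(n:ℝ) * Real.log p).toNNReal)) (S n)).toReal :=
      le_trans hterm hPge
    simp only [hFdef]
    calc G n - (1 + Real.log (K n))/n
        = (1/(n:ℝ)) * ((n:ℝ) * G n - (1 + Real.log (K n))) := by field_simp
      _ ≤ (1/(n:ℝ)) * Real.log _ := by
          apply mul_le_mul_of_nonneg_left this (by positivity)
  exact tendsto_of_tendsto_of_tendsto_of_le_of_le' hLow hG hlow hup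



lemma AMS_tendsto_b (y : ℝ) (hy0 : 0 < y) (hy1 : y < 1) :
    Tendsto (fun n : ℕ => (Real.log y / Real.log (1 - 1/(n:ℝ))) / n) atTop
      (𝓝 (-Real.log y)) := by
  have h1 : Tendsto (fun n : ℕ => (n:ℝ) * Real.log (1 - 1/(n:ℝ))) atTop (𝓝 (-1)) := by
    have h := (Real.tendsto_mul_log_one_add_div_atTop (-1)).comp
      (tendsto_natCast_atTop_atTop (R := ℝ))
    have he : ∀ n : ℕ, (1 : ℝ) + (-1)/(n:ℝ) = 1 - 1/(n:ℝ) := by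
      intro n; ring
    apply h.congr
    intro n
    simp only [Function.comp]
    rw [he n]
  have h2 := Tendsto.div (tendsto_const_nhds (x := Real.log y)) h1 (by norm_num)
  have he : ∀ n : ℕ, (Real.log y / Real.log (1 - 1/(n:ℝ))) / n
      = Real.log y / ((n:ℝ) * Real.log (1 - 1/(n:ℝ))) := by
    intro n
    rw [div_div, mul_comm]
  rw [show -Real.log y = Real.log y / (-1) by ring]
  apply h2.congr
  intro n
  simp only [Pi.div_apply]
  rw [he n]

lemma AMS_tendsto_nat_div (b : ℕ → ℝ) (K : ℕ → ℕ) (a : ℝ)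
    (hb : Tendsto (fun n : ℕ => b n / n) atTop (𝓝 a))
    (hbd : ∀ᶠ n : ℕ in atTop, b n - 1 ≤ K n ∧ (K n : ℝ) ≤ b n + 1) :
    Tendsto (fun n : ℕ => (K n:ℝ)/n) atTop (𝓝 a) := by
  have hlo : Tendsto (fun n : ℕ => (b n - 1)/n) atTop (𝓝 a) := by
    have := hb.sub tendsto_one_div_atTop_nhds_zero_nat
    simpa [sub_div] using this
  have hhi : Tendsto (fun n : ℕ => (b n + 1)/n) atTop (𝓝 a) := by
    have := hb.add tendsto_one_div_atTop_nhds_zero_nat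
    simpa [add_div] using this
  apply tendsto_of_tendsto_of_tendsto_of_le_of_le' hlo hhi
  · filter_upwards [hbd, eventually_ge_atTop 1] with n hbdn hn
    have hn0 : (0:ℝ) < n := by exact_mod_cast hn
    gcongr
    exact hbdn.1
  · filter_upwards [hbd, eventually_ge_atTop 1] with n hbdn hn
    have hn0 : (0:ℝ) < n := by exact_mod_cast hn
    gcongr
    exact hbdn.2

lemma AMS_hr_coe (p : ℝ) (hp0 : 0 < p) (hp1 : p < 1) (n : ℕ) :
    (((-(n:ℝ) * Real.log p).toNNReal : ℝ≥0) : ℝ) = (n:ℝ) * (-Real.log p) := by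
  rw [Real.coe_toNNReal]
  · ring
  · nlinarith [Real.log_neg hp0 hp1, (Nat.cast_nonneg n : (0:ℝ) ≤ n)]

/-- One-sided large deviations for the AMS(n,1) estimator `p̂^{n,1} = (1−1/n)^{J^{n,1}}`,
where `J^{n,1}` is Poisson with mean `−n log p`:
(i) for `y ∈ (p,1)`, `(1/n)·log P((1−1/n)^{J} ≥ y) → −I(y)`;
(ii) for `y ∈ (0,p)`, `(1/n)·log P((1−1/n)^{J} ≤ y) → −I(y)`. -/
theorem tendsto_log_poisson_deviation (p : ℝ) (hp : p ∈ Set.Ioo (0 : ℝ) 1) :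
    (∀ y : ℝ, y ∈ Set.Ioo p 1 →
      Tendsto (fun n : ℕ =>
        (1 / (n : ℝ)) * Real.log
          ((poissonMeasure (Real.toNNReal (-(n : ℝ) * Real.log p)))
            {j : ℕ | y ≤ (1 - 1 / (n : ℝ)) ^ j}).toReal)
        atTop (nhds (-amsRate p y))) ∧
    (∀ y : ℝ, y ∈ Set.Ioo (0 : ℝ) p →
      Tendsto (fun n : ℕ =>
        (1 / (n : ℝ)) * Real.log
          ((poissonMeasure (Real.toNNReal (-(n : ℝ) * Real.log p)))
            {j : ℕ | (1 - 1 / (n : ℝ)) ^ j ≤ y}).toReal)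
        atTop (nhds (-amsRate p y))) := by
  obtain ⟨hp0, hp1⟩ := hp
  have hl : 0 < -Real.log p := by nlinarith [Real.log_neg hp0 hp1]
  set l : ℝ := -Real.log p with hldef
  -- common facts
  have hcfact : ∀ n : ℕ, 2 ≤ n → 0 < 1 - 1/(n:ℝ) ∧ 1 - 1/(n:ℝ) < 1 := by
    intro n hn
    have h2 : (2:ℝ) ≤ n := by exact_mod_cast hn
    constructor
    · have : 1/(n:ℝ) ≤ 1/2 := by
        apply div_le_div_of_nonneg_left (by norm_num) (by norm_num) h2
      linarith
    · have : 0 < 1/(n:ℝ) := by positivity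
      linarith
  constructor
  · -- case (i)
    intro y hy
    obtain ⟨hyp, hy1⟩ := hy
    have hy0 : 0 < y := lt_trans hp0 hyp
    have ha : 0 < -Real.log y := by nlinarith [Real.log_neg hy0 hy1]
    set a : ℝ := -Real.log y with hadef
    have hal : a < l := by
      have := Real.log_lt_log hp0 hyp
      simp only [hadef, hldef]
      linarith
    set b : ℕ → ℝ := fun n => Real.log y / Real.log (1 - 1/(n:ℝ)) with hbdef
    set K : ℕ → ℕ := fun n => ⌊b n⌋₊ with hKdef
    set S : ℕ → Set ℕ := fun n => {j : ℕ | y ≤ (1 - 1/(n:ℝ)) ^ j} with hSdef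
    have hbpos : ∀ n : ℕ, 2 ≤ n → 0 ≤ b n := by
      intro n hn
      obtain ⟨hc0, hc1⟩ := hcfact n hn
      have hlc : Real.log (1 - 1/(n:ℝ)) < 0 := Real.log_neg hc0 hc1
      have hly : Real.log y < 0 := Real.log_neg hy0 hy1
      simp only [hbdef]
      exact div_nonneg_of_nonpos (Real.log_neg hy0 hy1).le hlc.le
    have hb : Tendsto (fun n : ℕ => b n / n) atTop (𝓝 a) := AMS_tendsto_b y hy0 hy1
    have hK : Tendsto (fun n : ℕ => (K n:ℝ)/n) atTop (𝓝 a) := by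
      apply AMS_tendsto_nat_div b K a hb
      filter_upwards [eventually_ge_atTop 2] with n hn
      exact ⟨(Nat.sub_one_lt_floor (b n)).le,
        le_trans (Nat.floor_le (hbpos n hn)) (by linarith)⟩
    have hSeq : ∀ n : ℕ, 2 ≤ n → S n = Set.Iic (K n) := by
      intro n hn
      obtain ⟨hc0, hc1⟩ := hcfact n hn
      have hlc : Real.log (1 - 1/(n:ℝ)) < 0 := Real.log_neg hc0 hc1
      ext j
      simp only [hSdef, Set.mem_setOf_eq, Set.mem_Iic]
      rw [Nat.le_floor_iff (hbpos n hn)]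
      rw [← Real.log_le_log_iff hy0 (pow_pos hc0 j), Real.log_pow]
      rw [le_div_iff_of_neg hlc]
    have hmem : ∀ᶠ n : ℕ in atTop, K n ∈ S n := by
      filter_upwards [eventually_ge_atTop 2] with n hn
      rw [hSeq n hn]
      exact Set.mem_Iic.2 le_rfl
    have hK1 : ∀ᶠ n : ℕ in atTop, 1 ≤ K n := by
      filter_upwards [hK.eventually_const_lt (show (0:ℝ) < a from ha)] with n h1
      by_contra hc
      push_neg at hc
      have hz : K n = 0 := by omega
      rw [hz] at h1
      simp at h1
    have hub : ∀ᶠ n : ℕ in atTop,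
        ((poissonMeasure ((-(n:ℝ) * Real.log p).toNNReal)) (S n)).toReal
          ≤ exp ((K n : ℝ) * Real.log (((n:ℝ) * l) / K n) + K n - (n:ℝ) * l) := by
      filter_upwards [eventually_ge_atTop 2, hK1, hK.eventually_lt_const hal] with n hn hk1 hklt
      have hn0 : (0:ℝ) < n := by positivity
      have hk0 : (0:ℝ) < K n := by exact_mod_cast hk1
      have hklt' : (K n : ℝ) < (n:ℝ) * l := by
        rw [div_lt_iff₀ hn0] at hklt
        linarith [hklt]
      set θ : ℝ := Real.log (((n:ℝ) * l) / K n) with hθdef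
      have hθ : 0 ≤ θ := Real.log_nonneg ((le_div_iff₀ hk0).2 (by linarith))
      calc ((poissonMeasure ((-(n:ℝ) * Real.log p).toNNReal)) (S n)).toReal
          = ∑' j, (Set.Iic (K n)).indicator
              (poissonPMFReal ((-(n:ℝ) * Real.log p).toNNReal)) j := by
            rw [AMS_meas_toReal, hSeq n hn]
        _ ≤ exp (θ * K n - ((-(n:ℝ) * Real.log p).toNNReal : ℝ)
              + ((-(n:ℝ) * Real.log p).toNNReal : ℝ) * exp (-θ)) :=
            AMS_chernoff_Iic _ (K n) θ hθ
        _ = exp ((K n : ℝ) * Real.log (((n:ℝ) * l) / K n) + K n - (n:ℝ) * l) := by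
            congr 1
            rw [AMS_hr_coe p hp0 hp1 n, ← hldef]
            rw [hθdef, Real.exp_neg, Real.exp_log (by positivity : (0:ℝ) < (n:ℝ) * l / K n)]
            have hinv : ((n:ℝ) * l) * (((n:ℝ) * l) / (K n:ℝ))⁻¹ = K n := by
              rw [inv_div]
              field_simp
            rw [hinv]
            ring
    have hmaster := AMS_master p hp0 hp1 a ha K S hK hmem hub
    have hlim : a * Real.log (l/a) + a + Real.log p = -amsRate p y := by
      rw [amsRate]
      have h1 : Real.log p / Real.log y = l / a := by
        rw [show Real.log p = -l by simp [hldef], show Real.log y = -a by simp [hadef],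
          neg_div_neg_eq]
      have h2 : Real.log (y/p) = Real.log y - Real.log p :=
        Real.log_div (ne_of_gt hy0) (ne_of_gt hp0)
      rw [h1, h2, show Real.log y = -a by simp [hadef], show Real.log p = -l by simp [hldef]]
      ring
    rw [hlim] at hmaster
    exact hmaster
  · -- case (ii)
    intro y hy
    obtain ⟨hy0, hyp⟩ := hy
    have hy1 : y < 1 := lt_trans hyp hp1
    have ha : 0 < -Real.log y := by nlinarith [Real.log_neg hy0 hy1]
    set a : ℝ := -Real.log y with hadef
    have hal : l < a := by
      have := Real.log_lt_log hy0 hyp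
      simp only [hadef, hldef]
      linarith
    set b : ℕ → ℝ := fun n => Real.log y / Real.log (1 - 1/(n:ℝ)) with hbdef
    set K : ℕ → ℕ := fun n => ⌈b n⌉₊ with hKdef
    set S : ℕ → Set ℕ := fun n => {j : ℕ | (1 - 1/(n:ℝ)) ^ j ≤ y} with hSdef
    have hbpos : ∀ n : ℕ, 2 ≤ n → 0 ≤ b n := by
      intro n hn
      obtain ⟨hc0, hc1⟩ := hcfact n hn
      have hlc : Real.log (1 - 1/(n:ℝ)) < 0 := Real.log_neg hc0 hc1
      have hly : Real.log y < 0 := Real.log_neg hy0 hy1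
      simp only [hbdef]
      exact div_nonneg_of_nonpos (Real.log_neg hy0 hy1).le hlc.le
    have hb : Tendsto (fun n : ℕ => b n / n) atTop (𝓝 a) := AMS_tendsto_b y hy0 hy1
    have hK : Tendsto (fun n : ℕ => (K n:ℝ)/n) atTop (𝓝 a) := by
      apply AMS_tendsto_nat_div b K a hb
      filter_upwards [eventually_ge_atTop 2] with n hn
      exact ⟨le_trans (by linarith) (Nat.le_ceil (b n)),
        (Nat.ceil_lt_add_one (hbpos n hn)).le⟩
    have hSeq : ∀ n : ℕ, 2 ≤ n → S n = Set.Ici (K n) := by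
      intro n hn
      obtain ⟨hc0, hc1⟩ := hcfact n hn
      have hlc : Real.log (1 - 1/(n:ℝ)) < 0 := Real.log_neg hc0 hc1
      ext j
      simp only [hSdef, Set.mem_setOf_eq, Set.mem_Ici]
      rw [show (K n ≤ j) = (⌈b n⌉₊ ≤ j) from rfl, Nat.ceil_le]
      rw [← Real.log_le_log_iff (pow_pos hc0 j) hy0, Real.log_pow]
      rw [div_le_iff_of_neg hlc]
    have hmem : ∀ᶠ n : ℕ in atTop, K n ∈ S n := by
      filter_upwards [eventually_ge_atTop 2] with n hn
      rw [hSeq n hn]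
      exact Set.mem_Ici.2 le_rfl
    have hub : ∀ᶠ n : ℕ in atTop,
        ((poissonMeasure ((-(n:ℝ) * Real.log p).toNNReal)) (S n)).toReal
          ≤ exp ((K n : ℝ) * Real.log (((n:ℝ) * l) / K n) + K n - (n:ℝ) * l) := by
      filter_upwards [eventually_ge_atTop 2, hK.eventually_const_lt hal] with n hn hkgt
      have hn0 : (0:ℝ) < n := by positivity
      have hkgt' : (n:ℝ) * l < K n := by
        rw [lt_div_iff₀ hn0] at hkgt
        linarith [hkgt]
      have hk0 : (0:ℝ) < K n := lt_trans (by positivity) hkgt' 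
      set θ : ℝ := Real.log ((K n : ℝ) / ((n:ℝ) * l)) with hθdef
      have hθ : 0 ≤ θ := Real.log_nonneg ((le_div_iff₀ (by positivity)).2 (by linarith))
      calc ((poissonMeasure ((-(n:ℝ) * Real.log p).toNNReal)) (S n)).toReal
          = ∑' j, (Set.Ici (K n)).indicator
              (poissonPMFReal ((-(n:ℝ) * Real.log p).toNNReal)) j := by
            rw [AMS_meas_toReal, hSeq n hn]
        _ ≤ exp (-(θ * K n) - ((-(n:ℝ) * Real.log p).toNNReal : ℝ)
              + ((-(n:ℝ) * Real.log p).toNNReal : ℝ) * exp θ) :=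
            AMS_chernoff_Ici _ (K n) θ hθ
        _ = exp ((K n : ℝ) * Real.log (((n:ℝ) * l) / K n) + K n - (n:ℝ) * l) := by
            congr 1
            rw [AMS_hr_coe p hp0 hp1 n, ← hldef]
            rw [hθdef, Real.exp_log (by positivity : (0:ℝ) < (K n:ℝ) / ((n:ℝ) * l))]
            have hinv : ((n:ℝ) * l) * ((K n:ℝ) / ((n:ℝ) * l)) = K n := by
              field_simp
            rw [hinv]
            have hloginv : Real.log (((n:ℝ) * l) / (K n:ℝ))
                = - Real.log ((K n:ℝ) / ((n:ℝ) * l)) := by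
              rw [← Real.log_inv, inv_div]
            rw [hloginv]
            ring
    have hmaster := AMS_master p hp0 hp1 a ha K S hK hmem hub
    have hlim : a * Real.log (l/a) + a + Real.log p = -amsRate p y := by
      rw [amsRate]
      have h1 : Real.log p / Real.log y = l / a := by
        rw [show Real.log p = -l by simp [hldef], show Real.log y = -a by simp [hadef],
          neg_div_neg_eq]
      have h2 : Real.log (y/p) = Real.log y - Real.log p :=
        Real.log_div (ne_of_gt hy0) (ne_of_gt hp0)
      rw [h1, h2, show Real.log y = -a by simp [hadef], show Real.log p = -l by simp [hldef]]
      ring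
    rw [hlim] at hmaster
    exact hmaster
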